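/- Let κ > 1 and let Λ : ℝ² → ℝ satisfy |∂_ξ^α ∂_x^β Λ(x,ξ)| ≤ ρ₀ A^{α+β} (α!β!)^κ ⟨ξ⟩^{1/κ - α} for all α, β ∈ ℕ and (x,ξ) ∈ ℝ², for some ρ₀, A > 0. Then e^{Λ} belongs to the infinite-order class S^∞_{κ;κ}(ℝ²), i.e. there exist A′, c > 0 with |∂_ξ^α ∂_x^β e^{Λ(x,ξ)}| ≤ A′^{α+β+1} (α!β!)^κ ⟨ξ⟩^{-α} e^{c⟨ξ⟩^{1/κ}} for all α, β ∈ ℕ and (x,ξ) ∈ ℝ². -/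

import Mathlib

open Real Finset

noncomputable section StmtAux10

/-- partial derivative in the first variable -/
def DX (f : ℝ × ℝ → ℝ) : ℝ × ℝ → ℝ := fun p => deriv (fun y => f (y, p.2)) p.1
/-- partial derivative in the second variable -/
def DQ (f : ℝ × ℝ → ℝ) : ℝ × ℝ → ℝ := fun p => deriv (fun y => f (p.1, y)) p.2

lemma hasDerivAt_sliceX {f : ℝ × ℝ → ℝ} (hf : ContDiff ℝ (⊤ : ℕ∞) f) (p : ℝ × ℝ) :
    HasDerivAt (fun y => f (y, p.2)) (fderiv ℝ f p ((1:ℝ), (0:ℝ))) p.1 := by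
  have h1 : HasDerivAt (fun y : ℝ => (y, p.2)) ((1:ℝ), (0:ℝ)) p.1 :=
    (hasDerivAt_id p.1).prodMk (hasDerivAt_const p.1 p.2)
  exact ((hf.differentiable (by simp) p).hasFDerivAt.comp_hasDerivAt p.1 h1 : _)

lemma hasDerivAt_sliceQ {f : ℝ × ℝ → ℝ} (hf : ContDiff ℝ (⊤ : ℕ∞) f) (p : ℝ × ℝ) :
    HasDerivAt (fun y => f (p.1, y)) (fderiv ℝ f p ((0:ℝ), (1:ℝ))) p.2 := by
  have h1 : HasDerivAt (fun y : ℝ => (p.1, y)) ((0:ℝ), (1:ℝ)) p.2 :=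
    (hasDerivAt_const p.2 p.1).prodMk (hasDerivAt_id p.2)
  exact ((hf.differentiable (by simp) p).hasFDerivAt.comp_hasDerivAt p.2 h1 : _)

lemma DX_apply {f : ℝ × ℝ → ℝ} (hf : ContDiff ℝ (⊤ : ℕ∞) f) (p : ℝ × ℝ) :
    DX f p = fderiv ℝ f p ((1:ℝ), (0:ℝ)) := (hasDerivAt_sliceX hf p).deriv

lemma DQ_apply {f : ℝ × ℝ → ℝ} (hf : ContDiff ℝ (⊤ : ℕ∞) f) (p : ℝ × ℝ) :
    DQ f p = fderiv ℝ f p ((0:ℝ), (1:ℝ)) := (hasDerivAt_sliceQ hf p).deriv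

lemma contDiff_DX {f : ℝ × ℝ → ℝ} (hf : ContDiff ℝ (⊤ : ℕ∞) f) : ContDiff ℝ (⊤ : ℕ∞) (DX f) := by
  have : DX f = fun p => fderiv ℝ f p ((1:ℝ), (0:ℝ)) := funext fun p => DX_apply hf p
  rw [this]
  exact (hf.fderiv_right (by simp)).clm_apply contDiff_const

lemma contDiff_DQ {f : ℝ × ℝ → ℝ} (hf : ContDiff ℝ (⊤ : ℕ∞) f) : ContDiff ℝ (⊤ : ℕ∞) (DQ f) := by
  have : DQ f = fun p => fderiv ℝ f p ((0:ℝ), (1:ℝ)) := funext fun p => DQ_apply hf p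
  rw [this]
  exact (hf.fderiv_right (by simp)).clm_apply contDiff_const

lemma DX_mul {f g : ℝ × ℝ → ℝ} (hf : ContDiff ℝ (⊤ : ℕ∞) f) (hg : ContDiff ℝ (⊤ : ℕ∞) g) :
    DX (fun p => f p * g p) = fun p => DX f p * g p + f p * DX g p := by
  funext p
  have h1 := hasDerivAt_sliceX hf p
  have h2 := hasDerivAt_sliceX hg p
  have h3 : HasDerivAt (fun y => f (y, p.2) * g (y, p.2))
      (fderiv ℝ f p (1, 0) * g p + f p * fderiv ℝ g p (1, 0)) p.1 := h1.mul h2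
  show deriv (fun y => f (y, p.2) * g (y, p.2)) p.1 = _
  rw [h3.deriv, DX_apply hf, DX_apply hg]

lemma DQ_mul {f g : ℝ × ℝ → ℝ} (hf : ContDiff ℝ (⊤ : ℕ∞) f) (hg : ContDiff ℝ (⊤ : ℕ∞) g) :
    DQ (fun p => f p * g p) = fun p => DQ f p * g p + f p * DQ g p := by
  funext p
  have h1 := hasDerivAt_sliceQ hf p
  have h2 := hasDerivAt_sliceQ hg p
  have h3 : HasDerivAt (fun y => f (p.1, y) * g (p.1, y))
      (fderiv ℝ f p (0, 1) * g p + f p * fderiv ℝ g p (0, 1)) p.2 := h1.mul h2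
  show deriv (fun y => f (p.1, y) * g (p.1, y)) p.2 = _
  rw [h3.deriv, DQ_apply hf, DQ_apply hg]

lemma DX_sum {ι : Type} (s : Finset ι) (F : ι → ℝ × ℝ → ℝ)
    (h : ∀ i ∈ s, ContDiff ℝ (⊤ : ℕ∞) (F i)) :
    DX (fun p => ∑ i ∈ s, F i p) = fun p => ∑ i ∈ s, DX (F i) p := by
  funext p
  show deriv (fun y => ∑ i ∈ s, F i (y, p.2)) p.1 = _
  rw [deriv_fun_sum (fun i hi => (hasDerivAt_sliceX (h i hi) p).differentiableAt)]
  rfl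

lemma DQ_sum {ι : Type} (s : Finset ι) (F : ι → ℝ × ℝ → ℝ)
    (h : ∀ i ∈ s, ContDiff ℝ (⊤ : ℕ∞) (F i)) :
    DQ (fun p => ∑ i ∈ s, F i p) = fun p => ∑ i ∈ s, DQ (F i) p := by
  funext p
  show deriv (fun y => ∑ i ∈ s, F i (p.1, y)) p.2 = _
  rw [deriv_fun_sum (fun i hi => (hasDerivAt_sliceQ (h i hi) p).differentiableAt)]
  rfl

lemma DX_const_mul {f : ℝ × ℝ → ℝ} (hf : ContDiff ℝ (⊤ : ℕ∞) f) (c : ℝ) :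
    DX (fun p => c * f p) = fun p => c * DX f p := by
  funext p
  show deriv (fun y => c * f (y, p.2)) p.1 = _
  rw [deriv_const_mul c (hasDerivAt_sliceX hf p).differentiableAt]
  rfl

lemma DQ_const_mul {f : ℝ × ℝ → ℝ} (hf : ContDiff ℝ (⊤ : ℕ∞) f) (c : ℝ) :
    DQ (fun p => c * f p) = fun p => c * DQ f p := by
  funext p
  show deriv (fun y => c * f (p.1, y)) p.2 = _
  rw [deriv_const_mul c (hasDerivAt_sliceQ hf p).differentiableAt]
  rfl

section Leib

variable (D : (ℝ × ℝ → ℝ) → (ℝ × ℝ → ℝ))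
variable (hD : ∀ f, ContDiff ℝ (⊤ : ℕ∞) f → ContDiff ℝ (⊤ : ℕ∞) (D f))
variable (hDmul : ∀ f g, ContDiff ℝ (⊤ : ℕ∞) f → ContDiff ℝ (⊤ : ℕ∞) g →
    D (fun p => f p * g p) = fun p => D f p * g p + f p * D g p)
variable (hDsum : ∀ {ι : Type} (s : Finset ι) (F : ι → ℝ × ℝ → ℝ),
    (∀ i ∈ s, ContDiff ℝ (⊤ : ℕ∞) (F i)) →
    D (fun p => ∑ i ∈ s, F i p) = fun p => ∑ i ∈ s, D (F i) p)
variable (hDsmul : ∀ (c : ℝ) (f : ℝ × ℝ → ℝ), ContDiff ℝ (⊤ : ℕ∞) f →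
    D (fun p => c * f p) = fun p => c * D f p)

include hD hDmul hDsum hDsmul

omit hDmul hDsum hDsmul in
lemma itD_smooth : ∀ (n : ℕ) (f : ℝ × ℝ → ℝ), ContDiff ℝ (⊤ : ℕ∞) f → ContDiff ℝ (⊤ : ℕ∞) (D^[n] f) := by
  intro n
  induction n with
  | zero => intro f hf; exact hf
  | succ n ih =>
    intro f hf
    rw [Function.iterate_succ_apply]
    exact ih _ (hD f hf)

lemma leibD : ∀ (n : ℕ) (f g : ℝ × ℝ → ℝ), ContDiff ℝ (⊤ : ℕ∞) f → ContDiff ℝ (⊤ : ℕ∞) g →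
    D^[n] (fun p => f p * g p) =
      fun p => ∑ k ∈ Finset.range (n + 1),
        (n.choose k : ℝ) * (D^[k] f p * D^[n - k] g p) := by
  intro n
  induction n with
  | zero =>
    intro f g hf hg
    funext p
    simp
  | succ n ih =>
    intro f g hf hg
    rw [Function.iterate_succ_apply', ih f g hf hg]
    have hsm : ∀ k, ContDiff ℝ (⊤ : ℕ∞) (fun p => (n.choose k : ℝ) * (D^[k] f p * D^[n - k] g p)) := by
      intro k
      exact contDiff_const.mul ((itD_smooth D hD k f hf).mul (itD_smooth D hD (n - k) g hg))
    have h1 : D (fun p => ∑ k ∈ Finset.range (n + 1),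
        (n.choose k : ℝ) * (D^[k] f p * D^[n - k] g p)) =
        fun p => ∑ k ∈ Finset.range (n + 1),
          D (fun q => (n.choose k : ℝ) * (D^[k] f q * D^[n - k] g q)) p :=
      hDsum _ _ (fun k _ => hsm k)
    rw [h1]
    have h2 : ∀ k, D (fun q => (n.choose k : ℝ) * (D^[k] f q * D^[n - k] g q)) =
        fun q => (n.choose k : ℝ) *
          (D^[k+1] f q * D^[n - k] g q + D^[k] f q * D^[(n-k)+1] g q) := by
      intro k
      rw [hDsmul _ _ ((itD_smooth D hD k f hf).mul (itD_smooth D hD (n - k) g hg)),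
        hDmul _ _ (itD_smooth D hD k f hf) (itD_smooth D hD (n - k) g hg)]
      funext q
      rw [Function.iterate_succ_apply', Function.iterate_succ_apply']
    funext p
    simp only [fun k => congrFun (h2 k) p]
    -- now pure algebra with F k := D^[k] f p, G k := D^[k] g p
    set F : ℕ → ℝ := fun k => D^[k] f p with hF
    set G : ℕ → ℝ := fun k => D^[k] g p with hG
    have key : ∑ k ∈ Finset.range (n + 1),
        (n.choose k : ℝ) * (F (k+1) * G (n - k) + F k * G ((n-k)+1)) =
        ∑ k ∈ Finset.range (n + 1 + 1), ((n+1).choose k : ℝ) * (F k * G (n + 1 - k)) := by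
      have expand : ∀ k, (n.choose k : ℝ) * (F (k+1) * G (n - k) + F k * G ((n-k)+1)) =
          (n.choose k : ℝ) * (F (k+1) * G (n - k)) + (n.choose k : ℝ) * (F k * G ((n-k)+1)) := by
        intro k; ring
      rw [Finset.sum_congr rfl (fun k _ => expand k), Finset.sum_add_distrib]
      -- second sum: rewrite (n-k)+1 = n+1-k for k ≤ n
      have e2 : ∑ k ∈ Finset.range (n + 1), (n.choose k : ℝ) * (F k * G ((n-k)+1)) =
          ∑ k ∈ Finset.range (n + 1), (n.choose k : ℝ) * (F k * G (n + 1 - k)) := by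
        refine Finset.sum_congr rfl fun k hk => ?_
        rw [Finset.mem_range] at hk
        rw [Nat.succ_sub (Nat.lt_succ_iff.mp hk)]
      rw [e2]
      -- RHS: peel off k = 0 via sum_range_succ'
      rw [Finset.sum_range_succ' (fun k => ((n+1).choose k : ℝ) * (F k * G (n + 1 - k))) (n+1)]
      -- LHS second sum: peel off k = 0 too
      rw [Finset.sum_range_succ' (fun k => (n.choose k : ℝ) * (F k * G (n + 1 - k))) n]
      simp only [Nat.choose_zero_right, Nat.cast_one, Nat.sub_zero, Nat.choose_succ_succ,
        Nat.cast_add]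
      -- first sum: extend range n → range (n+1) on shifted? combine
      have e3 : ∑ k ∈ Finset.range (n+1), ((n.choose k : ℝ) + (n.choose (k+1) : ℝ)) *
          (F (k+1) * G (n + 1 - (k+1))) =
          ∑ k ∈ Finset.range (n+1), (n.choose k : ℝ) * (F (k+1) * G (n - k)) +
          ∑ k ∈ Finset.range n, (n.choose (k+1) : ℝ) * (F (k+1) * G (n - k)) := by
        have : ∀ k ∈ Finset.range (n+1), ((n.choose k : ℝ) + (n.choose (k+1) : ℝ)) *
            (F (k+1) * G (n + 1 - (k+1))) =
            (n.choose k : ℝ) * (F (k+1) * G (n - k)) +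
            (n.choose (k+1) : ℝ) * (F (k+1) * G (n - k)) := by
          intro k hk
          have : n + 1 - (k+1) = n - k := by omega
          rw [this]; ring
        rw [Finset.sum_congr rfl this, Finset.sum_add_distrib]
        congr 1
        rw [Finset.sum_range_succ]
        simp
      have e4 : ∑ k ∈ Finset.range n, (n.choose (k+1) : ℝ) * (F (k+1) * G (n - k)) =
          ∑ k ∈ Finset.range n, (n.choose (k+1) : ℝ) * (F (k+1) * G (n + 1 - (k+1))) := by
        refine Finset.sum_congr rfl fun k hk => ?_
        have h5 : n + 1 - (k+1) = n - k := by omega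
        rw [h5]
      rw [e3, e4]
      ring
    exact key
  
end Leib
section Leib2

variable (D : (ℝ × ℝ → ℝ) → (ℝ × ℝ → ℝ))
variable (hD : ∀ f, ContDiff ℝ (⊤ : ℕ∞) f → ContDiff ℝ (⊤ : ℕ∞) (D f))
variable (hDsum : ∀ {ι : Type} (s : Finset ι) (F : ι → ℝ × ℝ → ℝ),
    (∀ i ∈ s, ContDiff ℝ (⊤ : ℕ∞) (F i)) →
    D (fun p => ∑ i ∈ s, F i p) = fun p => ∑ i ∈ s, D (F i) p)
variable (hDsmul : ∀ (c : ℝ) (f : ℝ × ℝ → ℝ), ContDiff ℝ (⊤ : ℕ∞) f →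
    D (fun p => c * f p) = fun p => c * D f p)

include hD hDsum in
lemma itDsum : ∀ (n : ℕ) {ι : Type} (s : Finset ι) (F : ι → ℝ × ℝ → ℝ),
    (∀ i ∈ s, ContDiff ℝ (⊤ : ℕ∞) (F i)) →
    D^[n] (fun p => ∑ i ∈ s, F i p) = fun p => ∑ i ∈ s, D^[n] (F i) p := by
  intro n
  induction n with
  | zero => intro ι s F h; rfl
  | succ n ih =>
    intro ι s F h
    rw [Function.iterate_succ_apply, hDsum s F h, ih s (fun i => D (F i)) (fun i hi => hD _ (h i hi))]
    funext p
    exact Finset.sum_congr rfl fun i _ => by rw [← Function.iterate_succ_apply]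

include hD hDsmul in
lemma itDsmul : ∀ (n : ℕ) (c : ℝ) (f : ℝ × ℝ → ℝ), ContDiff ℝ (⊤ : ℕ∞) f →
    D^[n] (fun p => c * f p) = fun p => c * D^[n] f p := by
  intro n
  induction n with
  | zero => intro c f hf; rfl
  | succ n ih =>
    intro c f hf
    rw [Function.iterate_succ_apply, hDsmul c f hf, ih c (D f) (hD f hf)]
    funext p
    rw [← Function.iterate_succ_apply]

end Leib2

lemma mixed_mul (α β : ℕ) (f g : ℝ × ℝ → ℝ) (hf : ContDiff ℝ (⊤ : ℕ∞) f) (hg : ContDiff ℝ (⊤ : ℕ∞) g) :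
    DQ^[α] (DX^[β] (fun p => f p * g p)) =
      fun p => ∑ b ∈ Finset.range (β + 1), ∑ a ∈ Finset.range (α + 1),
        (β.choose b : ℝ) * ((α.choose a : ℝ) *
          (DQ^[a] (DX^[b] f) p * DQ^[α - a] (DX^[β - b] g) p)) := by
  have hX := leibD DX (fun _ hf => contDiff_DX hf) (fun _ _ hf hg => DX_mul hf hg) DX_sum (fun c _ hf => DX_const_mul hf c)
  have hQ := leibD DQ (fun _ hf => contDiff_DQ hf) (fun _ _ hf hg => DQ_mul hf hg) DQ_sum (fun c _ hf => DQ_const_mul hf c)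
  have hXs := itD_smooth DX (fun _ hf => contDiff_DX hf)
  have hQs := itD_smooth DQ (fun _ hf => contDiff_DQ hf)
  rw [hX β f g hf hg]
  rw [itDsum DQ (fun _ hf => contDiff_DQ hf) DQ_sum α (Finset.range (β+1))
      (fun b => fun p => (β.choose b : ℝ) * (DX^[b] f p * DX^[β - b] g p))
      (fun b _ => contDiff_const.mul ((hXs b f hf).mul (hXs (β - b) g hg)))]
  funext p
  refine Finset.sum_congr rfl fun b _ => ?_
  have h1 : DQ^[α] (fun p => (β.choose b : ℝ) * (DX^[b] f p * DX^[β - b] g p)) =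
      fun p => (β.choose b : ℝ) * DQ^[α] (fun p => DX^[b] f p * DX^[β - b] g p) p :=
    itDsmul DQ (fun _ hf => contDiff_DQ hf) (fun c _ hf => DQ_const_mul hf c) α _ _ ((hXs b f hf).mul (hXs (β - b) g hg))
  rw [h1, hQ α (DX^[b] f) (DX^[β - b] g) (hXs b f hf) (hXs (β - b) g hg)]
  simp [Finset.mul_sum]
lemma iterX (β : ℕ) : ∀ (G : ℝ × ℝ → ℝ) (x ξ : ℝ),
    iteratedDeriv β (fun y => G (y, ξ)) x = DX^[β] G (x, ξ) := by
  induction β with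
  | zero => intro G x ξ; simp
  | succ β ih =>
    intro G x ξ
    rw [iteratedDeriv_succ']
    have h : deriv (fun y => G (y, ξ)) = fun y => DX G (y, ξ) := rfl
    rw [h, ih (DX G) x ξ, ← Function.iterate_succ_apply]

lemma iterQ (α : ℕ) : ∀ (G : ℝ × ℝ → ℝ) (x ξ : ℝ),
    iteratedDeriv α (fun y => G (x, y)) ξ = DQ^[α] G (x, ξ) := by
  induction α with
  | zero => intro G x ξ; simp
  | succ α ih =>
    intro G x ξ
    rw [iteratedDeriv_succ']
    have h : deriv (fun y => G (x, y)) = fun y => DQ G (x, y) := rfl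
    rw [h, ih (DQ G) x ξ, ← Function.iterate_succ_apply]

lemma mixed_eq (H : ℝ → ℝ → ℝ) (α β : ℕ) (x ξ : ℝ) :
    iteratedDeriv α (fun ξ' => iteratedDeriv β (fun x' => H x' ξ') x) ξ =
      DQ^[α] (DX^[β] (fun p => H p.1 p.2)) (x, ξ) := by
  have h1 : (fun ξ' => iteratedDeriv β (fun x' => H x' ξ') x) =
      fun ξ' => DX^[β] (fun p => H p.1 p.2) (x, ξ') :=
    funext fun ξ' => iterX β (fun p => H p.1 p.2) x ξ'
  rw [h1]
  exact iterQ α _ x ξ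

lemma DX_exp {Λ : ℝ × ℝ → ℝ} (hΛ : ContDiff ℝ (⊤ : ℕ∞) Λ) :
    DX (fun p => Real.exp (Λ p)) = fun p => DX Λ p * Real.exp (Λ p) := by
  funext p
  have h := (hasDerivAt_sliceX hΛ p).exp
  show deriv (fun y => Real.exp (Λ (y, p.2))) p.1 = _
  rw [h.deriv, DX_apply hΛ p]
  exact mul_comm _ _

lemma DQ_exp {Λ : ℝ × ℝ → ℝ} (hΛ : ContDiff ℝ (⊤ : ℕ∞) Λ) :
    DQ (fun p => Real.exp (Λ p)) = fun p => DQ Λ p * Real.exp (Λ p) := by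
  funext p
  have h := (hasDerivAt_sliceQ hΛ p).exp
  show deriv (fun y => Real.exp (Λ (p.1, y))) p.2 = _
  rw [h.deriv, DQ_apply hΛ p]
  exact mul_comm _ _
/-- index set: nonzero pairs `(a,b)` with `a ≤ α`, `b ≤ β` -/
def S2 (α β : ℕ) : Finset (ℕ × ℕ) := (Finset.range (α+1) ×ˢ Finset.range (β+1)).erase (0,0)

lemma mem_S2 {p : ℕ × ℕ} {α β : ℕ} :
    p ∈ S2 α β ↔ p ≠ (0,0) ∧ p.1 ≤ α ∧ p.2 ≤ β := by
  simp [S2, Finset.mem_erase, Finset.mem_product, Nat.lt_succ_iff]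

/-- the weight of a single block -/
def ww (κ ρ₀ A t : ℝ) (a b : ℕ) : ℝ :=
  ρ₀ * A^(a+b) * ((a.factorial * b.factorial : ℕ) : ℝ)^(κ-1) * t

/-- majorant sum over "partitions into `j` blocks" -/
def TT (κ ρ₀ A t : ℝ) : ℕ → ℕ → ℕ → ℝ
  | 0 => fun α β => if α = 0 ∧ β = 0 then 1 else 0
  | (j+1) => fun α β => ∑ p ∈ S2 α β,
      ww κ ρ₀ A t p.1 p.2 * TT κ ρ₀ A t j (α - p.1) (β - p.2)

lemma TT_zero (κ ρ₀ A t : ℝ) (α β : ℕ) :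
    TT κ ρ₀ A t 0 α β = if α = 0 ∧ β = 0 then 1 else 0 := rfl

lemma TT_succ (κ ρ₀ A t : ℝ) (j α β : ℕ) :
    TT κ ρ₀ A t (j+1) α β = ∑ p ∈ S2 α β,
      ww κ ρ₀ A t p.1 p.2 * TT κ ρ₀ A t j (α - p.1) (β - p.2) := rfl

/-- weighted majorant sum -/
def WWt (κ ρ₀ A t : ℝ) (φ : ℕ × ℕ → ℝ) (j α β : ℕ) : ℝ :=
  ∑ p ∈ S2 α β, φ p * ww κ ρ₀ A t p.1 p.2 * TT κ ρ₀ A t j (α - p.1) (β - p.2)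

section Comb

variable {κ ρ₀ A t : ℝ}

lemma ww_nonneg (hρ₀ : 0 ≤ ρ₀) (hA : 0 ≤ A) (ht : 0 ≤ t) (a b : ℕ) :
    0 ≤ ww κ ρ₀ A t a b := by
  unfold ww
  have : (0:ℝ) ≤ ((a.factorial * b.factorial : ℕ) : ℝ)^(κ-1) :=
    Real.rpow_nonneg (Nat.cast_nonneg _) _
  positivity

lemma TT_nonneg (hρ₀ : 0 ≤ ρ₀) (hA : 0 ≤ A) (ht : 0 ≤ t) :
    ∀ j α β, 0 ≤ TT κ ρ₀ A t j α β := by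
  intro j
  induction j with
  | zero => intro α β; rw [TT_zero]; split <;> norm_num
  | succ j ih =>
    intro α β
    rw [TT_succ]
    exact Finset.sum_nonneg fun p _ => mul_nonneg (ww_nonneg hρ₀ hA ht _ _) (ih _ _)

lemma S2_zero : S2 0 0 = ∅ := by
  ext p
  simp only [mem_S2, Finset.notMem_empty, iff_false, not_and, Nat.le_zero]
  intro h h1 h2
  exact h (Prod.ext h1 h2)

lemma S2_filter (α β : ℕ) {p : ℕ × ℕ} (hp : p ∈ S2 α β) :
    S2 (α - p.1) (β - p.2) =
      (S2 α β).filter (fun q => p.1 + q.1 ≤ α ∧ p.2 + q.2 ≤ β) := by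
  obtain ⟨-, hp1, hp2⟩ := mem_S2.mp hp
  ext q
  simp only [mem_S2, Finset.mem_filter]
  constructor
  · rintro ⟨hq0, hq1, hq2⟩
    exact ⟨⟨hq0, le_trans hq1 (Nat.sub_le _ _), le_trans hq2 (Nat.sub_le _ _)⟩,
      by omega, by omega⟩
  · rintro ⟨⟨hq0, -, -⟩, h1, h2⟩
    exact ⟨hq0, by omega, by omega⟩

lemma S2_swap (α β : ℕ) (f : ℕ × ℕ → ℕ × ℕ → ℝ) :
    ∑ p ∈ S2 α β, ∑ q ∈ S2 (α - p.1) (β - p.2), f p q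
      = ∑ q ∈ S2 α β, ∑ p ∈ S2 (α - q.1) (β - q.2), f p q := by
  have l1 : ∑ p ∈ S2 α β, ∑ q ∈ S2 (α - p.1) (β - p.2), f p q
      = ∑ p ∈ S2 α β, ∑ q ∈ S2 α β,
          if p.1 + q.1 ≤ α ∧ p.2 + q.2 ≤ β then f p q else 0 := by
    refine Finset.sum_congr rfl fun p hp => ?_
    rw [S2_filter α β hp, Finset.sum_filter]
  have l2 : ∑ q ∈ S2 α β, ∑ p ∈ S2 (α - q.1) (β - q.2), f p q
      = ∑ q ∈ S2 α β, ∑ p ∈ S2 α β,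
          if q.1 + p.1 ≤ α ∧ q.2 + p.2 ≤ β then f p q else 0 := by
    refine Finset.sum_congr rfl fun q hq => ?_
    rw [S2_filter α β hq, Finset.sum_filter]
  rw [l1, l2, Finset.sum_comm]
  refine Finset.sum_congr rfl fun q _ => Finset.sum_congr rfl fun p _ => ?_
  rw [Nat.add_comm q.1 p.1, Nat.add_comm q.2 p.2]
lemma symW (φ : ℕ × ℕ → ℝ)
    (hφ : ∀ p q : ℕ × ℕ, p.1 ≤ q.1 → p.2 ≤ q.2 →
      φ p + φ (q.1 - p.1, q.2 - p.2) = φ q) :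
    ∀ (j α β : ℕ), ((j : ℝ) + 1) * WWt κ ρ₀ A t φ j α β
      = φ (α, β) * TT κ ρ₀ A t (j+1) α β := by
  intro j
  induction j with
  | zero =>
    intro α β
    by_cases h0 : α = 0 ∧ β = 0
    · obtain ⟨rfl, rfl⟩ := h0
      rw [WWt, TT_succ, S2_zero]
      simp
    · have hmem : ((α, β) : ℕ × ℕ) ∈ S2 α β := mem_S2.mpr ⟨by
        intro hc
        apply h0
        exact ⟨congrArg Prod.fst hc, congrArg Prod.snd hc⟩, le_rfl, le_rfl⟩
      have hW : WWt κ ρ₀ A t φ 0 α β = φ (α, β) * ww κ ρ₀ A t α β := by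
        rw [WWt]
        rw [Finset.sum_eq_single_of_mem (α, β) hmem]
        · rw [Nat.sub_self, Nat.sub_self, TT_zero]
          simp
        · intro q hq hne
          obtain ⟨hq0, hq1, hq2⟩ := mem_S2.mp hq
          rw [TT_zero]
          rw [if_neg, mul_zero]
          rintro ⟨e1, e2⟩
          apply hne
          have : q.1 = α := by omega
          have : q.2 = β := by omega
          exact Prod.ext ‹q.1 = α› ‹q.2 = β›
      have hT : TT κ ρ₀ A t 1 α β = ww κ ρ₀ A t α β := by
        rw [TT_succ]
        rw [Finset.sum_eq_single_of_mem (α, β) hmem]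
        · rw [Nat.sub_self, Nat.sub_self, TT_zero]
          simp
        · intro q hq hne
          obtain ⟨hq0, hq1, hq2⟩ := mem_S2.mp hq
          rw [TT_zero]
          rw [if_neg, mul_zero]
          rintro ⟨e1, e2⟩
          apply hne
          have : q.1 = α := by omega
          have : q.2 = β := by omega
          exact Prod.ext ‹q.1 = α› ‹q.2 = β›
      rw [hW, hT]
      norm_num
  | succ j ih =>
    intro α β
    have expand : φ (α, β) * TT κ ρ₀ A t (j+2) α β
        = WWt κ ρ₀ A t φ (j+1) α β
          + ∑ p ∈ S2 α β, ww κ ρ₀ A t p.1 p.2 *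
              (φ (α - p.1, β - p.2) * TT κ ρ₀ A t (j+1) (α - p.1) (β - p.2)) := by
      rw [TT_succ, Finset.mul_sum, WWt, ← Finset.sum_add_distrib]
      refine Finset.sum_congr rfl fun p hp => ?_
      obtain ⟨-, hp1, hp2⟩ := mem_S2.mp hp
      have := hφ p (α, β) hp1 hp2
      calc φ (α, β) * (ww κ ρ₀ A t p.1 p.2 * TT κ ρ₀ A t (j+1) (α - p.1) (β - p.2))
          = (φ p + φ (α - p.1, β - p.2)) *
            (ww κ ρ₀ A t p.1 p.2 * TT κ ρ₀ A t (j+1) (α - p.1) (β - p.2)) := by rw [this]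
        _ = _ := by ring
    have step2 : ∑ p ∈ S2 α β, ww κ ρ₀ A t p.1 p.2 *
          (φ (α - p.1, β - p.2) * TT κ ρ₀ A t (j+1) (α - p.1) (β - p.2))
        = ((j : ℝ) + 1) * WWt κ ρ₀ A t φ (j+1) α β := by
      have e1 : ∀ p ∈ S2 α β,
          ww κ ρ₀ A t p.1 p.2 *
            (φ (α - p.1, β - p.2) * TT κ ρ₀ A t (j+1) (α - p.1) (β - p.2))
          = ww κ ρ₀ A t p.1 p.2 * (((j : ℝ) + 1) * WWt κ ρ₀ A t φ j (α - p.1) (β - p.2)) := by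
        intro p hp
        rw [ih (α - p.1) (β - p.2)]
      rw [Finset.sum_congr rfl e1]
      have e2 : ∑ p ∈ S2 α β,
          ww κ ρ₀ A t p.1 p.2 * (((j : ℝ) + 1) * WWt κ ρ₀ A t φ j (α - p.1) (β - p.2))
          = ((j : ℝ) + 1) * ∑ p ∈ S2 α β,
              ww κ ρ₀ A t p.1 p.2 * WWt κ ρ₀ A t φ j (α - p.1) (β - p.2) := by
        rw [Finset.mul_sum]
        exact Finset.sum_congr rfl fun p _ => by ring
      rw [e2]
      congr 1
      -- commutation: ∑_p ww p * WWt j (rest) = WWt (j+1)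
      show ∑ p ∈ S2 α β, ww κ ρ₀ A t p.1 p.2 * WWt κ ρ₀ A t φ j (α - p.1) (β - p.2)
          = WWt κ ρ₀ A t φ (j+1) α β
      have lhs : ∑ p ∈ S2 α β, ww κ ρ₀ A t p.1 p.2 * WWt κ ρ₀ A t φ j (α - p.1) (β - p.2)
          = ∑ p ∈ S2 α β, ∑ q ∈ S2 (α - p.1) (β - p.2),
              ww κ ρ₀ A t p.1 p.2 * (φ q * ww κ ρ₀ A t q.1 q.2 *
                TT κ ρ₀ A t j (α - p.1 - q.1) (β - p.2 - q.2)) := by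
        refine Finset.sum_congr rfl fun p _ => ?_
        rw [WWt, Finset.mul_sum]
      have rhs : WWt κ ρ₀ A t φ (j+1) α β
          = ∑ q ∈ S2 α β, ∑ p ∈ S2 (α - q.1) (β - q.2),
              φ q * ww κ ρ₀ A t q.1 q.2 * (ww κ ρ₀ A t p.1 p.2 *
                TT κ ρ₀ A t j (α - q.1 - p.1) (β - q.2 - p.2)) := by
        rw [WWt]
        refine Finset.sum_congr rfl fun q _ => ?_
        rw [TT_succ, Finset.mul_sum]
      rw [lhs, rhs, S2_swap α β]
      refine Finset.sum_congr rfl fun q _ => Finset.sum_congr rfl fun p _ => ?_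
      have e3 : α - p.1 - q.1 = α - q.1 - p.1 := by omega
      have e4 : β - p.2 - q.2 = β - q.2 - p.2 := by omega
      rw [e3, e4]
      ring
    rw [expand, step2, WWt]
    push_cast
    ring
lemma geo_le (m : ℕ) : ∑ a ∈ Finset.range m, ((1:ℝ)/2)^a ≤ 2 := by
  have key : ∀ m : ℕ, ∑ a ∈ Finset.range m, ((1:ℝ)/2)^a = 2 - 2 * (1/2)^m := by
    intro m
    induction m with
    | zero => simp
    | succ m ih => rw [Finset.sum_range_succ, ih, pow_succ]; ring
  rw [key]
  have : (0:ℝ) ≤ 2 * (1/2)^m := by positivity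
  linarith

lemma geo_nonneg (m : ℕ) : (0:ℝ) ≤ ∑ a ∈ Finset.range m, ((1:ℝ)/2)^a :=
  Finset.sum_nonneg fun a _ => by positivity

lemma fact_le {a α : ℕ} (h : a ≤ α) : (a.factorial * (α - a).factorial) ≤ α.factorial :=
  Nat.le_of_dvd α.factorial_pos
    (by simpa using Nat.factorial_mul_factorial_dvd_factorial h)

lemma TT_le (hκ : 1 ≤ κ) (hρ₀ : 0 ≤ ρ₀) (hA : 0 ≤ A) (ht : 0 ≤ t) :
    ∀ j α β, TT κ ρ₀ A t j α β ≤
      (4*ρ₀*t)^j * (2*A)^(α+β) * ((α.factorial * β.factorial : ℕ) : ℝ)^(κ-1) := by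
  have hκ' : (0:ℝ) ≤ κ - 1 := by linarith
  intro j
  induction j with
  | zero =>
    intro α β
    rw [TT_zero]
    split
    · next h => obtain ⟨rfl, rfl⟩ := h; simp
    · next h =>
      have : (0:ℝ) ≤ ((α.factorial * β.factorial : ℕ) : ℝ)^(κ-1) :=
        Real.rpow_nonneg (Nat.cast_nonneg _) _
      positivity
  | succ j ih =>
    intro α β
    rw [TT_succ]
    have hterm : ∀ p ∈ S2 α β,
        ww κ ρ₀ A t p.1 p.2 * TT κ ρ₀ A t j (α - p.1) (β - p.2) ≤
          ((4*ρ₀*t)^j * (2*A)^(α+β) * ((α.factorial * β.factorial : ℕ) : ℝ)^(κ-1)) *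
            (ρ₀ * t * ((1:ℝ)/2)^(p.1 + p.2)) := by
      rintro ⟨a, b⟩ hp
      obtain ⟨-, ha, hb⟩ := mem_S2.mp hp
      have h1 : TT κ ρ₀ A t j (α - a) (β - b) ≤
          (4*ρ₀*t)^j * (2*A)^((α-a)+(β-b)) *
            (((α-a).factorial * (β-b).factorial : ℕ) : ℝ)^(κ-1) := ih _ _
      have hw : 0 ≤ ww κ ρ₀ A t a b := ww_nonneg hρ₀ hA ht a b
      have epow : (α-a)+(β-b) + (a+b) = α + β := by omega
      have hA2 : (A:ℝ)^(α+β) = A^((α-a)+(β-b)) * A^(a+b) := by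
        rw [← pow_add, epow]
      have h2a : ((2:ℝ))^(α+β) = 2^((α-a)+(β-b)) * 2^(a+b) := by
        rw [← pow_add, epow]
      have hfle : ((a.factorial * b.factorial : ℕ) : ℝ)^(κ-1) *
          (((α-a).factorial * (β-b).factorial : ℕ) : ℝ)^(κ-1) ≤
          ((α.factorial * β.factorial : ℕ) : ℝ)^(κ-1) := by
        rw [← Real.mul_rpow (Nat.cast_nonneg _) (Nat.cast_nonneg _)]
        apply Real.rpow_le_rpow (by positivity) _ hκ'
        have l1 : a.factorial * (α - a).factorial ≤ α.factorial := fact_le ha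
        have l2 : b.factorial * (β - b).factorial ≤ β.factorial := fact_le hb
        push_cast
        calc ((a.factorial : ℝ) * b.factorial) * ((α-a).factorial * (β-b).factorial)
            = ((a.factorial : ℝ) * (α-a).factorial) * (b.factorial * (β-b).factorial) := by
              ring
          _ ≤ (α.factorial : ℝ) * β.factorial := by
              apply mul_le_mul _ _ (by positivity) (by positivity)
              · exact_mod_cast l1
              · exact_mod_cast l2
      have hApow : A^(a+b) * (2*A)^((α-a)+(β-b)) = (2*A)^(α+β) * ((1:ℝ)/2)^(a+b) := by
        rw [mul_pow, mul_pow, hA2, h2a, div_pow, one_pow]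
        field_simp
      calc ww κ ρ₀ A t a b * TT κ ρ₀ A t j (α - a) (β - b)
          ≤ ww κ ρ₀ A t a b * ((4*ρ₀*t)^j * (2*A)^((α-a)+(β-b)) *
              (((α-a).factorial * (β-b).factorial : ℕ) : ℝ)^(κ-1)) :=
            mul_le_mul_of_nonneg_left h1 hw
        _ = ((4*ρ₀*t)^j * (ρ₀ * t)) * (A^(a+b) * (2*A)^((α-a)+(β-b))) *
              (((a.factorial * b.factorial : ℕ) : ℝ)^(κ-1) *
                (((α-a).factorial * (β-b).factorial : ℕ) : ℝ)^(κ-1)) := by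
            rw [ww]; ring
        _ = ((4*ρ₀*t)^j * (ρ₀ * t) * ((2*A)^(α+β) * ((1:ℝ)/2)^(a+b))) *
              (((a.factorial * b.factorial : ℕ) : ℝ)^(κ-1) *
                (((α-a).factorial * (β-b).factorial : ℕ) : ℝ)^(κ-1)) := by
            rw [hApow]
        _ ≤ ((4*ρ₀*t)^j * (ρ₀ * t) * ((2*A)^(α+β) * ((1:ℝ)/2)^(a+b))) *
              ((α.factorial * β.factorial : ℕ) : ℝ)^(κ-1) := by
            apply mul_le_mul_of_nonneg_left hfle (by positivity)
        _ = ((4*ρ₀*t)^j * (2*A)^(α+β) * ((α.factorial * β.factorial : ℕ) : ℝ)^(κ-1)) *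
              (ρ₀ * t * ((1:ℝ)/2)^(a+b)) := by ring
    have hC : (0:ℝ) ≤ (4*ρ₀*t)^j * (2*A)^(α+β) *
        ((α.factorial * β.factorial : ℕ) : ℝ)^(κ-1) := by
      have : (0:ℝ) ≤ ((α.factorial * β.factorial : ℕ) : ℝ)^(κ-1) :=
        Real.rpow_nonneg (Nat.cast_nonneg _) _
      positivity
    have hsum : ∑ p ∈ S2 α β, (ρ₀ * t * ((1:ℝ)/2)^(p.1+p.2)) ≤ ρ₀ * t * 4 := by
      have l1 : ∑ p ∈ S2 α β, (ρ₀ * t * ((1:ℝ)/2)^(p.1+p.2)) ≤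
          ∑ p ∈ Finset.range (α+1) ×ˢ Finset.range (β+1),
            (ρ₀ * t * ((1:ℝ)/2)^(p.1+p.2)) := by
        apply Finset.sum_le_sum_of_subset_of_nonneg (Finset.erase_subset _ _)
        intro p _ _
        positivity
      have l2 : ∑ p ∈ Finset.range (α+1) ×ˢ Finset.range (β+1),
            (ρ₀ * t * ((1:ℝ)/2)^(p.1+p.2))
          = ρ₀ * t * ((∑ a ∈ Finset.range (α+1), ((1:ℝ)/2)^a) *
              (∑ b ∈ Finset.range (β+1), ((1:ℝ)/2)^b)) := by
        rw [Finset.sum_product]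
        rw [Finset.sum_mul_sum, Finset.mul_sum]
        refine Finset.sum_congr rfl fun a _ => ?_
        rw [Finset.mul_sum]
        refine Finset.sum_congr rfl fun b _ => ?_
        rw [pow_add]
      have l3 : (∑ a ∈ Finset.range (α+1), ((1:ℝ)/2)^a) *
            (∑ b ∈ Finset.range (β+1), ((1:ℝ)/2)^b) ≤ 2 * 2 :=
        mul_le_mul (geo_le _) (geo_le _) (geo_nonneg _) (by norm_num)
      calc ∑ p ∈ S2 α β, (ρ₀ * t * ((1:ℝ)/2)^(p.1+p.2))
          ≤ ρ₀ * t * ((∑ a ∈ Finset.range (α+1), ((1:ℝ)/2)^a) *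
              (∑ b ∈ Finset.range (β+1), ((1:ℝ)/2)^b)) := l1.trans_eq l2
        _ ≤ ρ₀ * t * (2*2) := by
            apply mul_le_mul_of_nonneg_left l3 (by positivity)
        _ = ρ₀ * t * 4 := by ring
    calc ∑ p ∈ S2 α β, ww κ ρ₀ A t p.1 p.2 * TT κ ρ₀ A t j (α - p.1) (β - p.2)
        ≤ ∑ p ∈ S2 α β, ((4*ρ₀*t)^j * (2*A)^(α+β) *
            ((α.factorial * β.factorial : ℕ) : ℝ)^(κ-1)) *
              (ρ₀ * t * ((1:ℝ)/2)^(p.1+p.2)) := Finset.sum_le_sum hterm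
      _ = ((4*ρ₀*t)^j * (2*A)^(α+β) * ((α.factorial * β.factorial : ℕ) : ℝ)^(κ-1)) *
            ∑ p ∈ S2 α β, (ρ₀ * t * ((1:ℝ)/2)^(p.1+p.2)) := by rw [← Finset.mul_sum]
      _ ≤ ((4*ρ₀*t)^j * (2*A)^(α+β) * ((α.factorial * β.factorial : ℕ) : ℝ)^(κ-1)) *
            (ρ₀ * t * 4) := mul_le_mul_of_nonneg_left hsum hC
      _ = (4*ρ₀*t)^(j+1) * (2*A)^(α+β) * ((α.factorial * β.factorial : ℕ) : ℝ)^(κ-1) := by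
          rw [pow_succ]; ring
lemma sum_S2_w1 (α : ℕ) (g : ℕ × ℕ → ℝ) :
    ∑ p ∈ S2 (α+1) 0, (p.1 : ℝ) * g p
      = ∑ a ∈ Finset.range (α+1), ((a:ℝ)+1) * g (a+1, 0) := by
  have h1 : ∑ p ∈ S2 (α+1) 0, (p.1 : ℝ) * g p
      = ∑ p ∈ Finset.range (α+2) ×ˢ Finset.range 1, (p.1 : ℝ) * g p :=
    Finset.sum_erase _ (by simp)
  rw [h1, Finset.sum_product]
  simp only [Finset.sum_range_one]
  rw [Finset.sum_range_succ' (fun x => (x : ℝ) * g (x, 0)) (α+1)]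
  push_cast
  simp

lemma sum_S2_w2 (α β : ℕ) (g : ℕ × ℕ → ℝ) :
    ∑ p ∈ S2 α (β+1), (p.2 : ℝ) * g p
      = ∑ b ∈ Finset.range (β+1), ∑ a ∈ Finset.range (α+1), ((b:ℝ)+1) * g (a, b+1) := by
  have h1 : ∑ p ∈ S2 α (β+1), (p.2 : ℝ) * g p
      = ∑ p ∈ Finset.range (α+1) ×ˢ Finset.range (β+2), (p.2 : ℝ) * g p :=
    Finset.sum_erase _ (by simp)
  rw [h1, Finset.sum_product, Finset.sum_comm]
  rw [Finset.sum_range_succ' (fun y => ∑ x ∈ Finset.range (α+1), (y : ℝ) * g (x, y)) (β+1)]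
  push_cast
  simp
end Comb

/-- e^Λ belongs to the infinite-order symbol class S^∞_{κ;κ}(ℝ²). -/
theorem stmt_10 (κ ρ₀ A : ℝ) (hκ : 1 < κ) (hρ₀ : 0 < ρ₀) (hA : 0 < A)
    (Λ : ℝ → ℝ → ℝ)
    (hΛ_smooth : ContDiff ℝ (⊤ : ℕ∞) (fun p : ℝ × ℝ => Λ p.1 p.2))
    (hΛ : ∀ (α β : ℕ) (x ξ : ℝ),
      |iteratedDeriv α (fun ξ' => iteratedDeriv β (fun x' => Λ x' ξ') x) ξ| ≤
        ρ₀ * A ^ (α + β) * ((α.factorial * β.factorial : ℕ) : ℝ) ^ κ *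
          (Real.sqrt (1 + ξ^2)) ^ (1/κ - α)) :
    ∃ A' > (0:ℝ), ∃ c > (0:ℝ), ∀ (α β : ℕ) (x ξ : ℝ),
      |iteratedDeriv α (fun ξ' => iteratedDeriv β (fun x' => Real.exp (Λ x' ξ')) x) ξ| ≤
        A' ^ (α + β + 1) * ((α.factorial * β.factorial : ℕ) : ℝ) ^ κ *
          (Real.sqrt (1 + ξ^2)) ^ (-(α:ℝ)) *
          Real.exp (c * (Real.sqrt (1 + ξ^2)) ^ (1/κ)) := by
  classical
  have hκ1 : (1:ℝ) ≤ κ := hκ.le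
  set ΛP : ℝ × ℝ → ℝ := fun p => Λ p.1 p.2 with hΛPdef
  have hΛsm : ContDiff ℝ (⊤ : ℕ∞) ΛP := hΛ_smooth
  set E : ℝ × ℝ → ℝ := fun p => Real.exp (ΛP p) with hEdef
  have hEsm : ContDiff ℝ (⊤ : ℕ∞) E := Real.contDiff_exp.comp hΛsm
  have hu1 : ∀ ξ : ℝ, 1 ≤ Real.sqrt (1+ξ^2) := by
    intro ξ
    have h := Real.sqrt_le_sqrt (show (1:ℝ) ≤ 1+ξ^2 by nlinarith [sq_nonneg ξ])
    rwa [Real.sqrt_one] at h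
  have hu0 : ∀ ξ : ℝ, 0 < Real.sqrt (1+ξ^2) := fun ξ => lt_of_lt_of_le one_pos (hu1 ξ)
  have ht0 : ∀ ξ : ℝ, 0 ≤ Real.sqrt (1+ξ^2) ^ (1/κ) :=
    fun ξ => Real.rpow_nonneg (hu0 ξ).le _
  have hΛb : ∀ (a b : ℕ) (x ξ : ℝ), |DQ^[a] (DX^[b] ΛP) (x, ξ)| ≤
      ρ₀ * A ^ (a + b) * ((a.factorial * b.factorial : ℕ) : ℝ) ^ κ *
        (Real.sqrt (1 + ξ^2)) ^ (1/κ - (a:ℝ)) := by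
    intro a b x ξ
    have h := hΛ a b x ξ
    rwa [mixed_eq Λ a b x ξ] at h
  have hQs := itD_smooth DQ (fun _ hf => contDiff_DQ hf)
  have hXs := itD_smooth DX (fun _ hf => contDiff_DX hf)
  have DQE : DQ E = fun p => DQ ΛP p * E p := by
    funext p
    rw [hEdef, DQ_exp hΛsm]
  have DXE : DX E = fun p => DX ΛP p * E p := by
    funext p
    rw [hEdef, DX_exp hΛsm]
  have MAIN : ∀ n α β, α + β = n → ∀ x ξ : ℝ,
      |DQ^[α] (DX^[β] E) (x, ξ)| ≤
        Real.exp (ρ₀ * Real.sqrt (1+ξ^2) ^ (1/κ)) * (Real.sqrt (1+ξ^2)) ^ (-(α:ℝ)) *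
          ((α.factorial * β.factorial : ℕ) : ℝ) *
          ∑ j ∈ Finset.range (n+1),
            TT κ ρ₀ A (Real.sqrt (1+ξ^2) ^ (1/κ)) j α β / (j.factorial : ℝ) := by
    intro n
    induction n using Nat.strong_induction_on with
    | _ n IH =>
    intro α β hn x ξ
    set u := Real.sqrt (1+ξ^2) with hudef
    set t := u ^ (1/κ) with htdef
    have hu0' : (0:ℝ) < u := hu0 ξ
    have ht0' : (0:ℝ) ≤ t := ht0 ξ
    have IHb : ∀ α₁ β₁, α₁ + β₁ < n →
        |DQ^[α₁] (DX^[β₁] E) (x, ξ)| ≤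
          Real.exp (ρ₀ * Real.sqrt (1+ξ^2) ^ (1/κ)) * (Real.sqrt (1+ξ^2)) ^ (-(α₁:ℝ)) *
            ((α₁.factorial * β₁.factorial : ℕ) : ℝ) *
            ∑ j ∈ Finset.range n,
              TT κ ρ₀ A (Real.sqrt (1+ξ^2) ^ (1/κ)) j α₁ β₁ / (j.factorial : ℝ) := by
      intro α₁ β₁ hlt
      refine (IH (α₁+β₁) hlt α₁ β₁ rfl x ξ).trans ?_
      have hsub : Finset.range (α₁+β₁+1) ⊆ Finset.range n := Finset.range_subset_range.mpr (by omega)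
      have hmono : ∑ j ∈ Finset.range (α₁+β₁+1),
            TT κ ρ₀ A (Real.sqrt (1+ξ^2) ^ (1/κ)) j α₁ β₁ / (j.factorial : ℝ)
          ≤ ∑ j ∈ Finset.range n,
            TT κ ρ₀ A (Real.sqrt (1+ξ^2) ^ (1/κ)) j α₁ β₁ / (j.factorial : ℝ) :=
        Finset.sum_le_sum_of_subset_of_nonneg hsub
          (fun j _ _ => div_nonneg (TT_nonneg hρ₀.le hA.le (ht0 ξ) j α₁ β₁) (Nat.cast_nonneg _))
      apply mul_le_mul_of_nonneg_left hmono
      have := Real.rpow_nonneg (hu0 ξ).le (-(α₁:ℝ))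
      positivity
    match β, hn with
    | 0, hn =>
      match α, hn with
      | 0, hn =>
        -- base case
        have hn0 : n = 0 := by omega
        subst hn0
        have h' : |Λ x ξ| ≤ ρ₀ * t := by
          calc |Λ x ξ| ≤ ρ₀ * A^(0+0) * ((Nat.factorial 0 * Nat.factorial 0 : ℕ):ℝ)^κ *
              u ^ (1/κ - ((0:ℕ):ℝ)) := hΛ 0 0 x ξ
            _ = ρ₀ * t := by norm_num [Real.one_rpow, htdef]
        have hE0 : DQ^[0] (DX^[0] E) (x,ξ) = Real.exp (Λ x ξ) := rfl
        rw [hE0, Real.abs_exp]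
        have hle : Real.exp (Λ x ξ) ≤ Real.exp (ρ₀ * t) :=
          Real.exp_le_exp.mpr ((le_abs_self _).trans h')
        refine hle.trans (le_of_eq ?_)
        rw [show ∑ j ∈ Finset.range (0+1), TT κ ρ₀ A t j 0 0 / (j.factorial : ℝ)
            = 1 from by simp [TT_zero]]
        norm_num
      | (a'+1), hn =>
        -- ξ-peeling case
        have hn' : n = a' + 1 := by omega
        subst hn'
        have e3 : ∀ a : ℕ, DQ^[a] (DX^[0] (DQ ΛP)) = DQ^[a+1] ΛP :=
          fun a => (Function.iterate_succ_apply DQ a ΛP).symm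
        have rep : DQ^[a'+1] (DX^[0] E) (x,ξ) = ∑ a ∈ Finset.range (a'+1),
            (a'.choose a : ℝ) * (DQ^[a+1] ΛP (x,ξ) * DQ^[a'-a] (DX^[0] E) (x,ξ)) := by
          have e1 : DQ^[a'+1] (DX^[0] E) = DQ^[a'] (DX^[0] (fun p => DQ ΛP p * E p)) := by
            show DQ^[a'+1] E = DQ^[a'] (fun p => DQ ΛP p * E p)
            rw [Function.iterate_succ_apply, DQE]
          rw [e1, mixed_mul a' 0 (DQ ΛP) E (contDiff_DQ hΛsm) hEsm]
          simp only [zero_add, Finset.sum_range_one]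
          refine Finset.sum_congr rfl fun a _ => ?_
          rw [e3 a]
          norm_num
        have hterm : ∀ a ∈ Finset.range (a'+1),
            (a'.choose a : ℝ) * |DQ^[a+1] ΛP (x,ξ) * DQ^[a'-a] (DX^[0] E) (x,ξ)| ≤
              Real.exp (ρ₀*t) * u^(-(((a'+1:ℕ)):ℝ)) * (a'.factorial : ℝ) *
                ∑ j ∈ Finset.range (a'+1),
                  (((a:ℝ)+1) * ww κ ρ₀ A t (a+1) 0 * TT κ ρ₀ A t j (a'-a) 0) /
                    (j.factorial : ℝ) := by
          intro a ha
          have ha' : a ≤ a' := by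
            have := Finset.mem_range.mp ha
            omega
          have h1 : |DQ^[a+1] ΛP (x,ξ)| ≤
              ρ₀ * A^((a+1)+0) * (((a+1).factorial * Nat.factorial 0 : ℕ):ℝ)^κ *
                u ^ (1/κ - (((a+1:ℕ)):ℝ)) := hΛb (a+1) 0 x ξ
          have h2 : |DQ^[a'-a] (DX^[0] E) (x,ξ)| ≤
              Real.exp (ρ₀*t) * u ^ (-(((a'-a:ℕ)):ℝ)) *
                (((a'-a).factorial * Nat.factorial 0 : ℕ):ℝ) *
                ∑ j ∈ Finset.range (a'+1), TT κ ρ₀ A t j (a'-a) 0 / (j.factorial:ℝ) :=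
            IHb (a'-a) 0 (by omega)
          have hB1 : (0:ℝ) ≤ ρ₀ * A^((a+1)+0) * (((a+1).factorial * Nat.factorial 0 : ℕ):ℝ)^κ *
              u ^ (1/κ - (((a+1:ℕ)):ℝ)) := by
            have := Real.rpow_nonneg hu0'.le (1/κ - (((a+1:ℕ)):ℝ))
            have := Real.rpow_nonneg (Nat.cast_nonneg ((a+1).factorial * Nat.factorial 0)) κ
            positivity
          rw [abs_mul]
          have hprod := mul_le_mul h1 h2 (abs_nonneg _) hB1
          have hC0 : (0:ℝ) ≤ (a'.choose a : ℝ) := Nat.cast_nonneg _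
          refine (mul_le_mul_of_nonneg_left hprod hC0).trans (le_of_eq ?_)
          -- scalar rearrangement
          have hup : u^(1/κ - (((a+1:ℕ)):ℝ)) * u^(-(((a'-a:ℕ)):ℝ)) =
              t * u^(-(((a'+1:ℕ)):ℝ)) := by
            rw [htdef, ← Real.rpow_add hu0', ← Real.rpow_add hu0']
            congr 1
            push_cast [Nat.cast_sub ha']
            ring
          have hcomb : a'.choose a * ((a+1).factorial * Nat.factorial 0) *
              ((a'-a).factorial * Nat.factorial 0) = a'.factorial * (a+1) := by
            have hc := Nat.choose_mul_factorial_mul_factorial ha'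
            rw [Nat.factorial_zero, Nat.factorial_succ]
            calc a'.choose a * ((a+1) * a.factorial * 1) * ((a'-a).factorial * 1)
                = (a'.choose a * a.factorial * (a'-a).factorial) * (a+1) := by ring
              _ = a'.factorial * (a+1) := by rw [hc]
          have hcombR : (a'.choose a : ℝ) * (((a+1).factorial * Nat.factorial 0 : ℕ):ℝ) *
              (((a'-a).factorial * Nat.factorial 0 : ℕ):ℝ) = (a'.factorial : ℝ) * ((a:ℝ)+1) := by
            have : ((a'.choose a * ((a+1).factorial * Nat.factorial 0) *
                ((a'-a).factorial * Nat.factorial 0) : ℕ) : ℝ)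
                = ((a'.factorial * (a+1) : ℕ) : ℝ) := by exact_mod_cast congrArg Nat.cast hcomb
            push_cast at this ⊢
            linarith
          have hFne : (((a+1).factorial * Nat.factorial 0 : ℕ):ℝ) ≠ 0 := by
            have : 0 < (a+1).factorial * Nat.factorial 0 :=
              Nat.mul_pos (Nat.factorial_pos _) (Nat.factorial_pos _)
            exact_mod_cast this.ne'
          have hF : (((a+1).factorial * Nat.factorial 0 : ℕ):ℝ)^κ
              = (((a+1).factorial * Nat.factorial 0 : ℕ):ℝ)^(κ-1) *
                (((a+1).factorial * Nat.factorial 0 : ℕ):ℝ) := by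
            rw [← Real.rpow_add_one hFne (κ-1), sub_add_cancel]
          simp only [Finset.mul_sum]
          refine Finset.sum_congr rfl fun j _ => ?_
          rw [ww, hF]
          linear_combination
            ((a'.choose a : ℝ) * (((a+1).factorial * Nat.factorial 0 : ℕ):ℝ) *
              (((a'-a).factorial * Nat.factorial 0 : ℕ):ℝ) * ρ₀ * A^(a+1+0) *
              (((a+1).factorial * Nat.factorial 0 : ℕ):ℝ)^(κ-1) * Real.exp (ρ₀*t) *
              TT κ ρ₀ A t j (a'-a) 0 / (j.factorial:ℝ)) * hup +
            (ρ₀ * A^(a+1+0) * (((a+1).factorial * Nat.factorial 0 : ℕ):ℝ)^(κ-1) *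
              Real.exp (ρ₀*t) * t * u^(-(((a'+1:ℕ)):ℝ)) *
              TT κ ρ₀ A t j (a'-a) 0 / (j.factorial:ℝ)) * hcombR
        have habs : |DQ^[a'+1] (DX^[0] E) (x,ξ)| ≤ ∑ a ∈ Finset.range (a'+1),
            (a'.choose a : ℝ) * |DQ^[a+1] ΛP (x,ξ) * DQ^[a'-a] (DX^[0] E) (x,ξ)| := by
          rw [rep]
          refine (Finset.abs_sum_le_sum_abs _ _).trans (Finset.sum_le_sum fun a _ => ?_)
          rw [abs_mul, Nat.abs_cast]
        refine habs.trans ((Finset.sum_le_sum hterm).trans ?_)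
        have hφ1 : ∀ p q : ℕ×ℕ, p.1 ≤ q.1 → p.2 ≤ q.2 →
            ((p.1:ℝ)) + (((q.1-p.1, q.2-p.2) : ℕ×ℕ).1:ℝ) = (q.1:ℝ) := by
          intro p q h1 _
          push_cast [Nat.cast_sub h1]
          ring
        have e6 : ∀ j, ∑ a ∈ Finset.range (a'+1),
            ((a:ℝ)+1) * ww κ ρ₀ A t (a+1) 0 * TT κ ρ₀ A t j (a'-a) 0
            = WWt κ ρ₀ A t (fun p => (p.1:ℝ)) j (a'+1) 0 := by
          intro j
          rw [WWt]
          have e61 : ∑ p ∈ S2 (a'+1) 0, (fun p : ℕ×ℕ => (p.1:ℝ)) p * ww κ ρ₀ A t p.1 p.2 *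
              TT κ ρ₀ A t j ((a'+1)-p.1) (0-p.2)
              = ∑ p ∈ S2 (a'+1) 0, (p.1:ℝ) * (ww κ ρ₀ A t p.1 p.2 *
                TT κ ρ₀ A t j ((a'+1)-p.1) (0-p.2)) :=
            Finset.sum_congr rfl fun p _ => by ring
          rw [e61, sum_S2_w1 a'
            (fun p => ww κ ρ₀ A t p.1 p.2 * TT κ ρ₀ A t j ((a'+1)-p.1) (0-p.2))]
          refine Finset.sum_congr rfl fun a _ => ?_
          have : a' + 1 - (a+1) = a' - a := by omega
          rw [this]
          norm_num
          ring
        have e7 : ∀ j : ℕ, WWt κ ρ₀ A t (fun p => (p.1:ℝ)) j (a'+1) 0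
            = (((a':ℝ)+1) * TT κ ρ₀ A t (j+1) (a'+1) 0) / ((j:ℝ)+1) := by
          intro j
          have hs := @symW κ ρ₀ A t (fun p => (p.1:ℝ)) hφ1 j (a'+1) 0
          have hj1 : ((j:ℝ)+1) ≠ 0 := by positivity
          field_simp
          push_cast at hs
          linarith [hs]
        have hfact0 : ((Nat.factorial 0 : ℕ):ℝ) = 1 := by norm_num
        calc ∑ a ∈ Finset.range (a'+1), (Real.exp (ρ₀*t) * u^(-(((a'+1:ℕ)):ℝ)) *
              (a'.factorial:ℝ) * ∑ j ∈ Finset.range (a'+1),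
                (((a:ℝ)+1) * ww κ ρ₀ A t (a+1) 0 * TT κ ρ₀ A t j (a'-a) 0) / (j.factorial:ℝ))
            = Real.exp (ρ₀*t) * u^(-(((a'+1:ℕ)):ℝ)) * (a'.factorial:ℝ) *
              ∑ j ∈ Finset.range (a'+1),
                (∑ a ∈ Finset.range (a'+1),
                  ((a:ℝ)+1) * ww κ ρ₀ A t (a+1) 0 * TT κ ρ₀ A t j (a'-a) 0) /
                    (j.factorial:ℝ) := by
              rw [← Finset.mul_sum]
              congr 1
              rw [Finset.sum_comm]
              exact Finset.sum_congr rfl fun j _ => (Finset.sum_div _ _ _).symm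
          _ = Real.exp (ρ₀*t) * u^(-(((a'+1:ℕ)):ℝ)) * (a'.factorial:ℝ) *
              ∑ j ∈ Finset.range (a'+1),
                ((((a':ℝ)+1) * TT κ ρ₀ A t (j+1) (a'+1) 0) / ((j:ℝ)+1)) / (j.factorial:ℝ) := by
              congr 1
              exact Finset.sum_congr rfl fun j _ => by rw [e6 j, e7 j]
          _ = Real.exp (ρ₀*t) * u^(-(((a'+1:ℕ)):ℝ)) * (((a'+1).factorial : ℕ):ℝ) *
              ∑ j ∈ Finset.range (a'+1),
                TT κ ρ₀ A t (j+1) (a'+1) 0 / (((j+1).factorial : ℕ):ℝ) := by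
              rw [Finset.mul_sum, Finset.mul_sum]
              refine Finset.sum_congr rfl fun j _ => ?_
              have hf1 : (((j+1).factorial : ℕ):ℝ) = ((j:ℝ)+1) * ((j.factorial : ℕ):ℝ) := by
                push_cast [Nat.factorial_succ]
                ring
              have hf2 : (((a'+1).factorial : ℕ):ℝ) = ((a':ℝ)+1) * ((a'.factorial : ℕ):ℝ) := by
                push_cast [Nat.factorial_succ]
                ring
              rw [hf1, hf2]
              have hj1 : ((j:ℝ)+1) ≠ 0 := by positivity
              have hj2 : ((j.factorial : ℕ):ℝ) ≠ 0 := by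
                have := j.factorial_pos
                positivity
              field_simp
          _ ≤ Real.exp (ρ₀*t) * u^(-(((a'+1:ℕ)):ℝ)) * (((a'+1).factorial : ℕ):ℝ) *
              ∑ j ∈ Finset.range (a'+1+1), TT κ ρ₀ A t j (a'+1) 0 / ((j.factorial : ℕ):ℝ) := by
              apply mul_le_mul_of_nonneg_left
              · rw [Finset.sum_range_succ'
                  (fun j => TT κ ρ₀ A t j (a'+1) 0 / ((j.factorial : ℕ):ℝ)) (a'+1)]
                have h0 : 0 ≤ TT κ ρ₀ A t 0 (a'+1) 0 / ((Nat.factorial 0 : ℕ):ℝ) :=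
                  div_nonneg (TT_nonneg hρ₀.le hA.le ht0' 0 (a'+1) 0) (by positivity)
                linarith
              · have := Real.rpow_nonneg hu0'.le (-(((a'+1:ℕ)):ℝ))
                positivity
          _ = Real.exp (ρ₀*t) * u^(-(((a'+1:ℕ)):ℝ)) *
              (((a'+1).factorial * Nat.factorial 0 : ℕ):ℝ) *
              ∑ j ∈ Finset.range (a'+1+1), TT κ ρ₀ A t j (a'+1) 0 / ((j.factorial : ℕ):ℝ) := by
              norm_num
    | (b'+1), hn =>
      -- x-peeling case
      have hn' : n = α + (b'+1) := by omega
      subst hn'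
      have e3x : ∀ a b : ℕ, DQ^[a] (DX^[b] (DX ΛP)) = DQ^[a] (DX^[b+1] ΛP) :=
        fun a b => congrArg _ (Function.iterate_succ_apply DX b ΛP).symm
      have rep : DQ^[α] (DX^[b'+1] E) (x,ξ) = ∑ b ∈ Finset.range (b'+1), ∑ a ∈ Finset.range (α+1),
          (b'.choose b : ℝ) * ((α.choose a : ℝ) *
            (DQ^[a] (DX^[b+1] ΛP) (x,ξ) * DQ^[α-a] (DX^[b'-b] E) (x,ξ))) := by
        have e1 : DX^[b'+1] E = DX^[b'] (fun p => DX ΛP p * E p) := by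
          rw [Function.iterate_succ_apply, DXE]
        calc DQ^[α] (DX^[b'+1] E) (x,ξ)
            = DQ^[α] (DX^[b'] (fun p => DX ΛP p * E p)) (x,ξ) := by rw [e1]
          _ = ∑ b ∈ Finset.range (b'+1), ∑ a ∈ Finset.range (α+1),
              (b'.choose b : ℝ) * ((α.choose a : ℝ) *
                (DQ^[a] (DX^[b] (DX ΛP)) (x,ξ) * DQ^[α-a] (DX^[b'-b] E) (x,ξ))) := by
              exact congrFun (mixed_mul α b' (DX ΛP) E (contDiff_DX hΛsm) hEsm) (x,ξ)
          _ = _ := Finset.sum_congr rfl fun b _ => Finset.sum_congr rfl fun a _ => by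
              rw [e3x a b]
      have hterm : ∀ b ∈ Finset.range (b'+1), ∀ a ∈ Finset.range (α+1),
          (b'.choose b : ℝ) * ((α.choose a : ℝ) *
            |DQ^[a] (DX^[b+1] ΛP) (x,ξ) * DQ^[α-a] (DX^[b'-b] E) (x,ξ)|) ≤
          Real.exp (ρ₀*t) * u^(-(α:ℝ)) * ((α.factorial * b'.factorial : ℕ):ℝ) *
            ∑ j ∈ Finset.range (α+(b'+1)),
              (((b:ℝ)+1) * ww κ ρ₀ A t a (b+1) * TT κ ρ₀ A t j (α-a) (b'-b)) /
                (j.factorial : ℝ) := by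
        intro b hb a ha
        have hb' : b ≤ b' := by
          have := Finset.mem_range.mp hb
          omega
        have ha' : a ≤ α := by
          have := Finset.mem_range.mp ha
          omega
        have h1 : |DQ^[a] (DX^[b+1] ΛP) (x,ξ)| ≤
            ρ₀ * A^(a+(b+1)) * ((a.factorial * (b+1).factorial : ℕ):ℝ)^κ *
              u ^ (1/κ - ((a:ℕ):ℝ)) := hΛb a (b+1) x ξ
        have h2 : |DQ^[α-a] (DX^[b'-b] E) (x,ξ)| ≤
            Real.exp (ρ₀*t) * u ^ (-(((α-a:ℕ)):ℝ)) *
              (((α-a).factorial * (b'-b).factorial : ℕ):ℝ) *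
              ∑ j ∈ Finset.range (α+(b'+1)), TT κ ρ₀ A t j (α-a) (b'-b) / (j.factorial:ℝ) :=
          IHb (α-a) (b'-b) (by omega)
        have hB1 : (0:ℝ) ≤ ρ₀ * A^(a+(b+1)) * ((a.factorial * (b+1).factorial : ℕ):ℝ)^κ *
            u ^ (1/κ - ((a:ℕ):ℝ)) := by
          have := Real.rpow_nonneg hu0'.le (1/κ - ((a:ℕ):ℝ))
          have := Real.rpow_nonneg (Nat.cast_nonneg (a.factorial * (b+1).factorial)) κ
          positivity
        rw [abs_mul]
        have hprod := mul_le_mul h1 h2 (abs_nonneg _) hB1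
        have hC0 : (0:ℝ) ≤ (α.choose a : ℝ) := Nat.cast_nonneg _
        have hC0' : (0:ℝ) ≤ (b'.choose b : ℝ) := Nat.cast_nonneg _
        refine (mul_le_mul_of_nonneg_left
          (mul_le_mul_of_nonneg_left hprod hC0) hC0').trans (le_of_eq ?_)
        have hup : u^(1/κ - ((a:ℕ):ℝ)) * u^(-(((α-a:ℕ)):ℝ)) = t * u^(-(α:ℝ)) := by
          rw [htdef, ← Real.rpow_add hu0', ← Real.rpow_add hu0']
          congr 1
          push_cast [Nat.cast_sub ha']
          ring
        have hcomb : b'.choose b * (α.choose a) * (a.factorial * (b+1).factorial) *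
            ((α-a).factorial * (b'-b).factorial) = (α.factorial * b'.factorial) * (b+1) := by
          have c1 := Nat.choose_mul_factorial_mul_factorial ha'
          have c2 := Nat.choose_mul_factorial_mul_factorial hb'
          rw [Nat.factorial_succ]
          calc b'.choose b * (α.choose a) * (a.factorial * ((b+1) * b.factorial)) *
              ((α-a).factorial * (b'-b).factorial)
              = (α.choose a * a.factorial * (α-a).factorial) *
                (b'.choose b * b.factorial * (b'-b).factorial) * (b+1) := by ring
            _ = α.factorial * b'.factorial * (b+1) := by rw [c1, c2]
        have hcombR : (b'.choose b : ℝ) * (α.choose a : ℝ) *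
            ((a.factorial * (b+1).factorial : ℕ):ℝ) *
            (((α-a).factorial * (b'-b).factorial : ℕ):ℝ)
            = ((α.factorial * b'.factorial : ℕ):ℝ) * ((b:ℝ)+1) := by
          have : ((b'.choose b * (α.choose a) * (a.factorial * (b+1).factorial) *
              ((α-a).factorial * (b'-b).factorial) : ℕ) : ℝ)
              = (((α.factorial * b'.factorial) * (b+1) : ℕ) : ℝ) := by
            exact_mod_cast congrArg Nat.cast hcomb
          push_cast at this ⊢
          linarith
        have hFne : ((a.factorial * (b+1).factorial : ℕ):ℝ) ≠ 0 := by
          have : 0 < a.factorial * (b+1).factorial :=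
            Nat.mul_pos (Nat.factorial_pos _) (Nat.factorial_pos _)
          exact_mod_cast this.ne'
        have hF : ((a.factorial * (b+1).factorial : ℕ):ℝ)^κ
            = ((a.factorial * (b+1).factorial : ℕ):ℝ)^(κ-1) *
              ((a.factorial * (b+1).factorial : ℕ):ℝ) := by
          rw [← Real.rpow_add_one hFne (κ-1), sub_add_cancel]
        simp only [Finset.mul_sum]
        refine Finset.sum_congr rfl fun j _ => ?_
        rw [ww, hF]
        linear_combination
          ((b'.choose b : ℝ) * (α.choose a : ℝ) * ((a.factorial * (b+1).factorial : ℕ):ℝ) *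
            (((α-a).factorial * (b'-b).factorial : ℕ):ℝ) * ρ₀ * A^(a+(b+1)) *
            ((a.factorial * (b+1).factorial : ℕ):ℝ)^(κ-1) * Real.exp (ρ₀*t) *
            TT κ ρ₀ A t j (α-a) (b'-b) / (j.factorial:ℝ)) * hup +
          (ρ₀ * A^(a+(b+1)) * ((a.factorial * (b+1).factorial : ℕ):ℝ)^(κ-1) *
            Real.exp (ρ₀*t) * t * u^(-(α:ℝ)) *
            TT κ ρ₀ A t j (α-a) (b'-b) / (j.factorial:ℝ)) * hcombR
      have habs : |DQ^[α] (DX^[b'+1] E) (x,ξ)| ≤ ∑ b ∈ Finset.range (b'+1),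
          ∑ a ∈ Finset.range (α+1), (b'.choose b : ℝ) * ((α.choose a : ℝ) *
            |DQ^[a] (DX^[b+1] ΛP) (x,ξ) * DQ^[α-a] (DX^[b'-b] E) (x,ξ)|) := by
        rw [rep]
        refine (Finset.abs_sum_le_sum_abs _ _).trans (Finset.sum_le_sum fun b _ => ?_)
        refine (Finset.abs_sum_le_sum_abs _ _).trans (Finset.sum_le_sum fun a _ => ?_)
        rw [abs_mul, abs_mul, Nat.abs_cast, Nat.abs_cast]
      refine habs.trans ((Finset.sum_le_sum fun b hb =>
        Finset.sum_le_sum (hterm b hb)).trans ?_)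
      have hφ2 : ∀ p q : ℕ×ℕ, p.1 ≤ q.1 → p.2 ≤ q.2 →
          ((p.2:ℝ)) + (((q.1-p.1, q.2-p.2) : ℕ×ℕ).2:ℝ) = (q.2:ℝ) := by
        intro p q _ h2
        push_cast [Nat.cast_sub h2]
        ring
      have e6 : ∀ j, ∑ b ∈ Finset.range (b'+1), ∑ a ∈ Finset.range (α+1),
          ((b:ℝ)+1) * ww κ ρ₀ A t a (b+1) * TT κ ρ₀ A t j (α-a) (b'-b)
          = WWt κ ρ₀ A t (fun p => (p.2:ℝ)) j α (b'+1) := by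
        intro j
        rw [WWt]
        have e61 : ∑ p ∈ S2 α (b'+1), (fun p : ℕ×ℕ => (p.2:ℝ)) p * ww κ ρ₀ A t p.1 p.2 *
            TT κ ρ₀ A t j (α-p.1) ((b'+1)-p.2)
            = ∑ p ∈ S2 α (b'+1), (p.2:ℝ) * (ww κ ρ₀ A t p.1 p.2 *
              TT κ ρ₀ A t j (α-p.1) ((b'+1)-p.2)) :=
          Finset.sum_congr rfl fun p _ => by ring
        rw [e61, sum_S2_w2 α b'
          (fun p => ww κ ρ₀ A t p.1 p.2 * TT κ ρ₀ A t j (α-p.1) ((b'+1)-p.2))]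
        refine Finset.sum_congr rfl fun b _ => Finset.sum_congr rfl fun a _ => ?_
        have : b' + 1 - (b+1) = b' - b := by omega
        rw [this]
        ring
      have e7 : ∀ j : ℕ, WWt κ ρ₀ A t (fun p => (p.2:ℝ)) j α (b'+1)
          = (((b':ℝ)+1) * TT κ ρ₀ A t (j+1) α (b'+1)) / ((j:ℝ)+1) := by
        intro j
        have hs := @symW κ ρ₀ A t (fun p => (p.2:ℝ)) hφ2 j α (b'+1)
        have hj1 : ((j:ℝ)+1) ≠ 0 := by positivity
        field_simp
        push_cast at hs
        linarith [hs]
      calc ∑ b ∈ Finset.range (b'+1), ∑ a ∈ Finset.range (α+1),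
            (Real.exp (ρ₀*t) * u^(-(α:ℝ)) * ((α.factorial * b'.factorial : ℕ):ℝ) *
              ∑ j ∈ Finset.range (α+(b'+1)),
                (((b:ℝ)+1) * ww κ ρ₀ A t a (b+1) * TT κ ρ₀ A t j (α-a) (b'-b)) /
                  (j.factorial : ℝ))
          = Real.exp (ρ₀*t) * u^(-(α:ℝ)) * ((α.factorial * b'.factorial : ℕ):ℝ) *
            ∑ j ∈ Finset.range (α+(b'+1)),
              (∑ b ∈ Finset.range (b'+1), ∑ a ∈ Finset.range (α+1),
                ((b:ℝ)+1) * ww κ ρ₀ A t a (b+1) * TT κ ρ₀ A t j (α-a) (b'-b)) /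
                  (j.factorial : ℝ) := by
            simp only [← Finset.mul_sum]
            congr 1
            rw [Finset.sum_congr rfl fun b (_ : b ∈ Finset.range (b'+1)) => Finset.sum_comm]
            rw [Finset.sum_comm]
            refine Finset.sum_congr rfl fun j _ => ?_
            rw [Finset.sum_div]
            exact Finset.sum_congr rfl fun b _ => by rw [Finset.sum_div]
        _ = Real.exp (ρ₀*t) * u^(-(α:ℝ)) * ((α.factorial * b'.factorial : ℕ):ℝ) *
            ∑ j ∈ Finset.range (α+(b'+1)),
              ((((b':ℝ)+1) * TT κ ρ₀ A t (j+1) α (b'+1)) / ((j:ℝ)+1)) / (j.factorial:ℝ) := by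
            congr 1
            exact Finset.sum_congr rfl fun j _ => by rw [e6 j, e7 j]
        _ = Real.exp (ρ₀*t) * u^(-(α:ℝ)) * ((α.factorial * (b'+1).factorial : ℕ):ℝ) *
            ∑ j ∈ Finset.range (α+(b'+1)),
              TT κ ρ₀ A t (j+1) α (b'+1) / (((j+1).factorial : ℕ):ℝ) := by
            rw [Finset.mul_sum, Finset.mul_sum]
            refine Finset.sum_congr rfl fun j _ => ?_
            have hf1 : (((j+1).factorial : ℕ):ℝ) = ((j:ℝ)+1) * ((j.factorial : ℕ):ℝ) := by
              push_cast [Nat.factorial_succ]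
              ring
            have hf2 : ((α.factorial * (b'+1).factorial : ℕ):ℝ)
                = ((b':ℝ)+1) * ((α.factorial * b'.factorial : ℕ):ℝ) := by
              push_cast [Nat.factorial_succ]
              ring
            rw [hf1, hf2]
            have hj1 : ((j:ℝ)+1) ≠ 0 := by positivity
            have hj2 : ((j.factorial : ℕ):ℝ) ≠ 0 := by
              have := j.factorial_pos
              positivity
            field_simp
        _ ≤ Real.exp (ρ₀*t) * u^(-(α:ℝ)) * ((α.factorial * (b'+1).factorial : ℕ):ℝ) *
            ∑ j ∈ Finset.range (α+(b'+1)+1),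
              TT κ ρ₀ A t j α (b'+1) / ((j.factorial : ℕ):ℝ) := by
            apply mul_le_mul_of_nonneg_left
            · rw [Finset.sum_range_succ'
                (fun j => TT κ ρ₀ A t j α (b'+1) / ((j.factorial : ℕ):ℝ)) (α+(b'+1))]
              have h0 : 0 ≤ TT κ ρ₀ A t 0 α (b'+1) / ((Nat.factorial 0 : ℕ):ℝ) :=
                div_nonneg (TT_nonneg hρ₀.le hA.le ht0' 0 α (b'+1)) (by positivity)
              linarith
            · have := Real.rpow_nonneg hu0'.le (-(α:ℝ))
              positivity
  -- final assembly
  refine ⟨2*A+3, by linarith, 5*ρ₀, by linarith, ?_⟩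
  intro α β x ξ
  have hconv : iteratedDeriv α (fun ξ' => iteratedDeriv β (fun x' => Real.exp (Λ x' ξ')) x) ξ
      = DQ^[α] (DX^[β] E) (x, ξ) := mixed_eq (fun x' ξ' => Real.exp (Λ x' ξ')) α β x ξ
  rw [hconv]
  set u := Real.sqrt (1+ξ^2) with hudef
  set t := u ^ (1/κ) with htdef
  have h1 := MAIN (α+β) α β rfl x ξ
  have hTsum : ∑ j ∈ Finset.range (α+β+1), TT κ ρ₀ A t j α β / (j.factorial : ℝ)
      ≤ (2*A)^(α+β) * ((α.factorial * β.factorial : ℕ) : ℝ)^(κ-1) * Real.exp (4*ρ₀*t) := by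
    have hstep : ∀ j ∈ Finset.range (α+β+1),
        TT κ ρ₀ A t j α β / (j.factorial : ℝ) ≤
          ((2*A)^(α+β) * ((α.factorial * β.factorial : ℕ) : ℝ)^(κ-1)) *
            ((4*ρ₀*t)^j / (j.factorial : ℝ)) := by
      intro j _
      have hb := TT_le hκ1 hρ₀.le hA.le (ht0 ξ) j α β
      have hj : (0:ℝ) < (j.factorial : ℝ) := by exact_mod_cast j.factorial_pos
      calc TT κ ρ₀ A t j α β / (j.factorial : ℝ)
          ≤ ((4*ρ₀*t)^j * (2*A)^(α+β) * ((α.factorial * β.factorial : ℕ) : ℝ)^(κ-1)) /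
              (j.factorial : ℝ) := (div_le_div_iff_of_pos_right hj).mpr hb
        _ = ((2*A)^(α+β) * ((α.factorial * β.factorial : ℕ) : ℝ)^(κ-1)) *
              ((4*ρ₀*t)^j / (j.factorial : ℝ)) := by ring
    calc ∑ j ∈ Finset.range (α+β+1), TT κ ρ₀ A t j α β / (j.factorial : ℝ)
        ≤ ∑ j ∈ Finset.range (α+β+1),
            ((2*A)^(α+β) * ((α.factorial * β.factorial : ℕ) : ℝ)^(κ-1)) *
              ((4*ρ₀*t)^j / (j.factorial : ℝ)) := Finset.sum_le_sum hstep
      _ = ((2*A)^(α+β) * ((α.factorial * β.factorial : ℕ) : ℝ)^(κ-1)) *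
            ∑ j ∈ Finset.range (α+β+1), (4*ρ₀*t)^j / (j.factorial : ℝ) := by
          rw [← Finset.mul_sum]
      _ ≤ ((2*A)^(α+β) * ((α.factorial * β.factorial : ℕ) : ℝ)^(κ-1)) *
            Real.exp (4*ρ₀*t) := by
          apply mul_le_mul_of_nonneg_left
          · exact Real.sum_le_exp_of_nonneg (by positivity) _
          · have : (0:ℝ) ≤ ((α.factorial * β.factorial : ℕ) : ℝ)^(κ-1) :=
              Real.rpow_nonneg (Nat.cast_nonneg _) _
            positivity
  have hfactpos : (0:ℝ) < ((α.factorial * β.factorial : ℕ) : ℝ) := by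
    have : 0 < α.factorial * β.factorial := Nat.mul_pos (Nat.factorial_pos _) (Nat.factorial_pos _)
    exact_mod_cast this
  have hfe : ((α.factorial * β.factorial : ℕ) : ℝ)^κ
      = ((α.factorial * β.factorial : ℕ) : ℝ)^(κ-1) * ((α.factorial * β.factorial : ℕ) : ℝ) := by
    rw [← Real.rpow_add_one hfactpos.ne' (κ-1), sub_add_cancel]
  have hun : (0:ℝ) ≤ u ^ (-(α:ℝ)) := Real.rpow_nonneg (hu0 ξ).le _
  have hfk : (0:ℝ) ≤ ((α.factorial * β.factorial : ℕ) : ℝ)^κ :=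
    Real.rpow_nonneg (Nat.cast_nonneg _) _
  calc |DQ^[α] (DX^[β] E) (x,ξ)|
      ≤ Real.exp (ρ₀ * t) * u ^ (-(α:ℝ)) * ((α.factorial * β.factorial : ℕ) : ℝ) *
        ∑ j ∈ Finset.range (α+β+1), TT κ ρ₀ A t j α β / (j.factorial:ℝ) := h1
    _ ≤ Real.exp (ρ₀ * t) * u ^ (-(α:ℝ)) * ((α.factorial * β.factorial : ℕ) : ℝ) *
        ((2*A)^(α+β) * ((α.factorial * β.factorial : ℕ):ℝ)^(κ-1) * Real.exp (4*ρ₀*t)) := by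
        apply mul_le_mul_of_nonneg_left hTsum
        exact mul_nonneg (mul_nonneg (Real.exp_nonneg _) hun) hfactpos.le
    _ = (2*A)^(α+β) * (((α.factorial * β.factorial : ℕ):ℝ)^κ) * u^(-(α:ℝ)) *
        Real.exp (5*ρ₀*t) := by
        rw [hfe, show (5:ℝ)*ρ₀*t = ρ₀*t + 4*ρ₀*t by ring, Real.exp_add]
        ring
    _ ≤ (2*A+3)^(α+β+1) * (((α.factorial * β.factorial : ℕ):ℝ)^κ) * u^(-(α:ℝ)) *
        Real.exp (5*ρ₀*t) := by
        have hbase : (2*A)^(α+β) ≤ (2*A+3)^(α+β+1) := by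
          calc (2*A)^(α+β) ≤ (2*A+3)^(α+β) := pow_le_pow_left₀ (by positivity) (by linarith) _
            _ ≤ (2*A+3)^(α+β+1) := pow_le_pow_right₀ (by linarith) (Nat.le_succ _)
        apply mul_le_mul_of_nonneg_right
          (mul_le_mul_of_nonneg_right (mul_le_mul_of_nonneg_right hbase hfk) hun)
          (Real.exp_nonneg _)
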